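/- Let (q_{ij}) be nonnegative rates on n states admitting a strictly positive equilibrium P*. Then for every state A_i, either q_{ji} = q_{ij} = 0 for all j, or A_i belongs to a directed cycle of transitions all of whose rate constants are strictly positive. -/

import Mathlib

open Finset

/-- From reflexive-transitive reachability extract a chain (walk). -/
lemma rtg_chain' {α : Type*} {E : α → α → Prop} {j i : α}
    (h : Relation.ReflTransGen E j i) :
    ∃ l : List α, List.Chain E j l ∧ (j :: l).getLast? = some i := by
  induction h using Relation.ReflTransGen.head_induction_on with
  | refl => exact ⟨[], List.Chain.nil, rfl⟩
  | head h' _ ih =>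
    obtain ⟨l, h1, h2⟩ := ih
    exact ⟨_ :: l, List.Chain.cons h' h1, by rw [List.getLast?_cons_cons]; exact h2⟩

/-- Any chain can be shortened to a duplicate-free chain with the same endpoints. -/
lemma dedup_chain' {α : Type*} [DecidableEq α] {E : α → α → Prop} :
    ∀ (N : ℕ) (l : List α) (a : α), l.length ≤ N → List.Chain E a l →
    ∃ l', List.Chain E a l' ∧ (a :: l').getLast? = (a :: l).getLast? ∧
      l' ⊆ l ∧ (a :: l').Nodup := by
  intro N
  induction N with
  | zero =>
    intro l a hlen _
    have : l = [] := List.length_eq_zero_iff.mp (Nat.le_zero.mp hlen)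
    subst this
    exact ⟨[], List.Chain.nil, rfl, by simp, by simp⟩
  | succ N ih =>
    intro l a hlen hch
    by_cases hmem : a ∈ l
    · obtain ⟨s, t, rfl⟩ := List.append_of_mem hmem
      have hsplit := (List.isChain_cons_split.mp hch).2
      have hlt : t.length ≤ N := by
        simp only [List.length_append, List.length_cons] at hlen; omega
      obtain ⟨t', h1, h2, h3, h4⟩ := ih t a hlt hsplit
      refine ⟨t', h1, ?_, fun x hx => by simp [h3 hx], h4⟩
      rw [h2]
      have heq : a :: (s ++ a :: t) = (a :: s) ++ (a :: t) := by simp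
      rw [heq, List.getLast?_append,
        List.getLast?_eq_getLast (l := a :: t) (List.cons_ne_nil _ _)]
      rfl
    · cases l with
      | nil => exact ⟨[], List.Chain.nil, rfl, by simp, by simp⟩
      | cons b t =>
        rw [List.Chain, List.chain_cons] at hch
        obtain ⟨hab, hbt⟩ := hch
        have hlt : t.length ≤ N := by
          simp only [List.length_cons] at hlen; omega
        obtain ⟨t', h1, h2, h3, h4⟩ := ih t b hlt hbt
        refine ⟨b :: t', List.chain_cons.mpr ⟨hab, h1⟩, ?_, List.cons_subset_cons b h3, ?_⟩
        · rw [List.getLast?_cons_cons, List.getLast?_cons_cons, h2]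
        · rw [List.nodup_cons]
          refine ⟨fun hmem' => hmem ?_, h4⟩
          rcases List.mem_cons.mp hmem' with h | h
          · exact h ▸ List.mem_cons_self
          · exact List.mem_cons_of_mem _ (h3 h)

/-- If a Markov chain has a strictly positive equilibrium then every state
either is disconnected (all its rate constants vanish) or belongs to a
directed cycle with strictly positive rate constants. -/
theorem state_in_positive_cycle (n : ℕ) (q : Fin n → Fin n → ℝ)
    (pstar : Fin n → ℝ) (hpos : ∀ i, 0 < pstar i)
    (hq : ∀ i j, i ≠ j → 0 ≤ q i j)
    (hbal : ∀ i, ∑ j ∈ Finset.univ.filter (· ≠ i), q i j * pstar j =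
      (∑ j ∈ Finset.univ.filter (· ≠ i), q j i) * pstar i) :
    ∀ i : Fin n,
      (∀ j, j ≠ i → q i j = 0 ∧ q j i = 0) ∨
      (∃ (k : ℕ) (f : Fin (k + 2) → Fin n), Function.Injective f ∧ f 0 = i ∧
        ∀ m : Fin (k + 2), 0 < q (f (m + 1)) (f m)) := by
  classical
  intro i
  by_cases hdis : ∀ j, j ≠ i → q i j = 0 ∧ q j i = 0
  · exact Or.inl hdis
  right
  push_neg at hdis
  set E : Fin n → Fin n → Prop := fun x y => x ≠ y ∧ 0 < q y x with hE
  -- there is an outgoing edge from i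
  have hout : ∃ j, i ≠ j ∧ 0 < q j i := by
    obtain ⟨j, hji, hj⟩ := hdis
    by_cases hz : q j i = 0
    · have hzi : q i j ≠ 0 := fun h => hj h hz
      have hpij : 0 < q i j := lt_of_le_of_ne (hq i j (Ne.symm hji)) (Ne.symm hzi)
      have hL : 0 < ∑ y ∈ Finset.univ.filter (· ≠ i), q i y * pstar y := by
        refine Finset.sum_pos' ?_
          ⟨j, Finset.mem_filter.mpr ⟨Finset.mem_univ _, hji⟩, mul_pos hpij (hpos j)⟩
        intro y hy
        simp only [Finset.mem_filter] at hy
        exact mul_nonneg (hq i y (Ne.symm hy.2)) (hpos y).le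
      rw [hbal i] at hL
      have hS : 0 < ∑ y ∈ Finset.univ.filter (· ≠ i), q y i := by
        nlinarith [hpos i, hL]
      by_contra hno
      push_neg at hno
      have : ∑ y ∈ Finset.univ.filter (· ≠ i), q y i ≤ 0 := by
        refine Finset.sum_nonpos fun y hy => ?_
        simp only [Finset.mem_filter] at hy
        exact hno y (Ne.symm hy.2)
      linarith
    · exact ⟨j, hji.symm, lt_of_le_of_ne (hq j i hji) (Ne.symm hz)⟩
  obtain ⟨j, hij, hqji⟩ := hout
  -- reachable set from j
  set S : Finset (Fin n) := Finset.univ.filter (fun x => Relation.ReflTransGen E j x) with hSdef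
  have hjS : j ∈ S := by
    simp only [hSdef, Finset.mem_filter, Finset.mem_univ, true_and]
    exact Relation.ReflTransGen.refl
  have hclosed : ∀ x ∈ S, ∀ y, E x y → y ∈ S := by
    intro x hx y hxy
    simp only [hSdef, Finset.mem_filter, Finset.mem_univ, true_and] at hx ⊢
    exact hx.tail hxy
  -- flux argument: no edge enters S from outside
  have hflux : ∀ x ∈ S, ∀ y, y ∉ S → q x y = 0 := by
    have key : ∑ x ∈ S, ∑ y ∈ Finset.univ.filter (· ≠ x), q x y * pstar y
        = ∑ x ∈ S, ∑ y ∈ Finset.univ.filter (· ≠ x), q y x * pstar x := by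
      refine Finset.sum_congr rfl fun x _ => ?_
      rw [← Finset.sum_mul]
      exact hbal x
    have hsplit : ∀ x ∈ S, ∀ g : Fin n → ℝ,
        ∑ y ∈ Finset.univ.filter (· ≠ x), g y
          = ∑ y ∈ S.filter (· ≠ x), g y + ∑ y ∈ Finset.univ.filter (· ∉ S), g y := by
      intro x hx g
      rw [← Finset.sum_filter_add_sum_filter_not (Finset.univ.filter (· ≠ x)) (· ∈ S)]
      congr 1
      · apply Finset.sum_congr _ (fun _ _ => rfl)
        ext y
        simp only [Finset.mem_filter, Finset.mem_univ, true_and]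
        tauto
      · apply Finset.sum_congr _ (fun _ _ => rfl)
        ext y
        simp only [Finset.mem_filter, Finset.mem_univ, true_and]
        exact ⟨And.right, fun h => ⟨fun e => h (e ▸ hx), h⟩⟩
    have hswap : ∑ x ∈ S, ∑ y ∈ S.filter (· ≠ x), q x y * pstar y
        = ∑ x ∈ S, ∑ y ∈ S.filter (· ≠ x), q y x * pstar x := by
      refine Finset.sum_comm' (s := S) (t := fun x => S.filter (· ≠ x))
        (t' := S) (s' := fun y => S.filter (· ≠ y)) ?_
      intro x y
      simp only [Finset.mem_filter]
      tauto
    have hD : ∀ x ∈ S, ∑ y ∈ Finset.univ.filter (· ∉ S), q y x * pstar x = 0 := by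
      intro x hx
      refine Finset.sum_eq_zero fun y hy => ?_
      simp only [Finset.mem_filter, Finset.mem_univ, true_and] at hy
      have hxy : y ≠ x := fun e => hy (e ▸ hx)
      have hnp : ¬ (0 < q y x) := fun hp => hy (hclosed x hx y ⟨hxy.symm, hp⟩)
      have h0 : q y x = 0 := le_antisymm (not_lt.mp hnp) (hq y x hxy)
      rw [h0, zero_mul]
    have key2 : ∑ x ∈ S, ∑ y ∈ S.filter (· ≠ x), q x y * pstar y
          + ∑ x ∈ S, ∑ y ∈ Finset.univ.filter (· ∉ S), q x y * pstar y
        = ∑ x ∈ S, ∑ y ∈ S.filter (· ≠ x), q y x * pstar x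
          + ∑ x ∈ S, ∑ y ∈ Finset.univ.filter (· ∉ S), q y x * pstar x := by
      rw [← Finset.sum_add_distrib, ← Finset.sum_add_distrib]
      calc ∑ x ∈ S, (∑ y ∈ S.filter (· ≠ x), q x y * pstar y
              + ∑ y ∈ Finset.univ.filter (· ∉ S), q x y * pstar y)
          = ∑ x ∈ S, ∑ y ∈ Finset.univ.filter (· ≠ x), q x y * pstar y :=
            Finset.sum_congr rfl (fun x hx => (hsplit x hx _).symm)
        _ = ∑ x ∈ S, ∑ y ∈ Finset.univ.filter (· ≠ x), q y x * pstar x := key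
        _ = ∑ x ∈ S, (∑ y ∈ S.filter (· ≠ x), q y x * pstar x
              + ∑ y ∈ Finset.univ.filter (· ∉ S), q y x * pstar x) :=
            Finset.sum_congr rfl (fun x hx => hsplit x hx _)
    have hDsum : ∑ x ∈ S, ∑ y ∈ Finset.univ.filter (· ∉ S), q y x * pstar x = 0 :=
      Finset.sum_eq_zero hD
    have hB0 : ∑ x ∈ S, ∑ y ∈ Finset.univ.filter (· ∉ S), q x y * pstar y = 0 := by
      linarith [key2, hswap, hDsum]
    have hnn : ∀ x ∈ S, 0 ≤ ∑ y ∈ Finset.univ.filter (· ∉ S), q x y * pstar y := by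
      intro x hx
      refine Finset.sum_nonneg fun y hy => ?_
      simp only [Finset.mem_filter, Finset.mem_univ, true_and] at hy
      exact mul_nonneg (hq x y (fun e => hy (e ▸ hx))) (hpos y).le
    intro x hx y hy
    have h1 := (Finset.sum_eq_zero_iff_of_nonneg hnn).mp hB0 x hx
    have hnn2 : ∀ y' ∈ Finset.univ.filter (· ∉ S), 0 ≤ q x y' * pstar y' := by
      intro y' hy'
      simp only [Finset.mem_filter, Finset.mem_univ, true_and] at hy'
      exact mul_nonneg (hq x y' (fun e => hy' (e ▸ hx))) (hpos y').le
    have h2 := (Finset.sum_eq_zero_iff_of_nonneg hnn2).mp h1 y (by simp [hy])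
    rcases mul_eq_zero.mp h2 with h | h
    · exact h
    · exact absurd h (hpos y).ne'
  -- i is reachable from j
  have hiS : i ∈ S := by
    by_contra hiS
    have := hflux j hjS i hiS
    linarith
  have hreach : Relation.ReflTransGen E j i := by
    simpa [hSdef] using hiS
  -- extract a duplicate-free path from j to i
  obtain ⟨l0, hch0, hlast0⟩ := rtg_chain' hreach
  obtain ⟨l, hch, hlast, hsub, hnd⟩ := dedup_chain' l0.length l0 j le_rfl hch0
  rw [hlast0] at hlast
  have hlnil : l ≠ [] := by
    rintro rfl
    simp only [List.getLast?_singleton, Option.some.injEq] at hlast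
    exact hij hlast.symm
  obtain ⟨k, hk⟩ : ∃ k, l.length = k + 1 :=
    ⟨l.length - 1, by have := List.length_pos_iff.mpr hlnil; omega⟩
  set P : List (Fin n) := i :: j :: l with hPdef
  have hPlen : P.length = k + 3 := by simp [hPdef, hk]
  have hchainP : List.Chain E i (j :: l) := List.chain_cons.mpr ⟨⟨hij, hqji⟩, hch⟩
  have hgl : (j :: l).getLast (List.cons_ne_nil _ _) = i := by
    have h' := hlast
    rw [List.getLast?_eq_getLast (l := j :: l) (List.cons_ne_nil _ _)] at h'
    exact Option.some.inj h'
  have hi_not : i ∉ (j :: l).dropLast := by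
    intro hmem
    have heq := List.dropLast_concat_getLast (l := j :: l) (List.cons_ne_nil _ _)
    rw [hgl] at heq
    rw [← heq] at hnd
    exact (List.nodup_append'.mp hnd).2.2 hmem (List.mem_singleton_self i)
  have hnodupP : P.dropLast.Nodup := by
    have h1 : (j :: l).dropLast.Nodup := ((j :: l).dropLast_sublist).nodup hnd
    rw [hPdef, List.dropLast_cons₂]
    exact List.nodup_cons.mpr ⟨hi_not, h1⟩
  have hdroplen : P.dropLast.length = k + 2 := by
    rw [List.length_dropLast, hPlen]
    omega
  -- the last entry of P is i
  have hPlast : ∀ h : k + 2 < P.length, P.get ⟨k + 2, h⟩ = i := by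
    intro h
    have h1 : P.getLast (by simp [hPdef]) = i := by
      show ((i :: j :: l : List (Fin n))).getLast (List.cons_ne_nil _ _) = i
      rw [List.getLast_cons (List.cons_ne_nil _ _)]
      exact hgl
    rw [List.getLast_eq_getElem] at h1
    simp only [List.get_eq_getElem]
    convert h1 using 2
    omega
  refine ⟨k, fun t => P.get ⟨t.val, by rw [hPlen]; exact Nat.lt_succ_of_lt t.isLt⟩,
    ?_, rfl, ?_⟩
  · -- injectivity
    intro a b hab
    simp only [List.get_eq_getElem] at hab
    have ha : (a : ℕ) < P.dropLast.length := by rw [hdroplen]; exact a.isLt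
    have hb : (b : ℕ) < P.dropLast.length := by rw [hdroplen]; exact b.isLt
    have hab' : P.dropLast.get ⟨a, ha⟩ = P.dropLast.get ⟨b, hb⟩ := by
      simp only [List.get_eq_getElem, List.getElem_dropLast]
      exact hab
    have := List.nodup_iff_injective_get.mp hnodupP hab'
    exact Fin.ext (congrArg Fin.val this : ((⟨a, ha⟩ : Fin _) : ℕ) = _)
  · -- cycle edges
    have hch' : List.Chain' E P := hchainP
    have hg := List.isChain_iff_getElem.mp hch'
    intro t
    by_cases ht : (t : ℕ) + 1 < k + 2
    · have h1 := hg t.val (by rw [hPlen]; omega)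
      have hval : ((t + 1 : Fin (k + 2)) : ℕ) = (t : ℕ) + 1 := by
        apply Fin.val_add_one_of_lt
        rw [Fin.lt_iff_val_lt_val, Fin.val_last]
        omega
      simp only [List.get_eq_getElem] at h1 ⊢
      simp only [hval]
      exact h1.2
    · have ht' : (t : ℕ) = k + 1 := by have := t.isLt; omega
      have hval : ((t + 1 : Fin (k + 2)) : ℕ) = 0 := by
        rw [Fin.val_add, Fin.val_one, ht']
        simp
      have h1 := hg (k + 1) (by rw [hPlen]; omega)
      have h2 := hPlast (by rw [hPlen]; omega)
      simp only [List.get_eq_getElem] at h1 h2 ⊢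
      simp only [hval, ht']
      rw [show (P[(0 : ℕ)]'(by rw [hPlen]; omega) : Fin n) = i from rfl]
      rw [← h2]
      exact h1.2
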